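/- arXiv:1212.2537 — 4 statements merged into one kernel-verified Lean document; each statement's English description precedes it below -/
import Mathlib

section
/- For real numbers F1, F2 in [0,1] and I1, I2 in [0,1] satisfying I1 + I2 ≤ 1, F1 ≥ 2^(1 - I1) - 1, and F2 ≥ 2^(1 - I2) - 1, it holds that 2·F1 + F2 ≥ 1 and F1 + 2·F2 ≥ 1. -/
/-- Fidelity uncertainty relation (numerical content of Lemma 3):
for `F1, F2, I1, I2 ∈ [0,1]` with `I1 + I2 ≤ 1`, `F1 ≥ 2^(1-I1) - 1` and
`F2 ≥ 2^(1-I2) - 1`, one has `2F1 + F2 ≥ 1` and `F1 + 2F2 ≥ 1`. -/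
theorem fidelity_uncertainty (F1 F2 I1 I2 : ℝ)
    (hF1 : F1 ∈ Set.Icc (0:ℝ) 1) (hF2 : F2 ∈ Set.Icc (0:ℝ) 1)
    (hI1 : I1 ∈ Set.Icc (0:ℝ) 1) (hI2 : I2 ∈ Set.Icc (0:ℝ) 1)
    (hsum : I1 + I2 ≤ 1)
    (h1 : F1 ≥ (2:ℝ) ^ (1 - I1) - 1) (h2 : F2 ≥ (2:ℝ) ^ (1 - I2) - 1) :
    2 * F1 + F2 ≥ 1 ∧ F1 + 2 * F2 ≥ 1 := by
  obtain ⟨hI1l, hI1r⟩ := hI1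
  obtain ⟨hI2l, hI2r⟩ := hI2
  set u : ℝ := (2:ℝ) ^ (1 - I1) with hu
  set v : ℝ := (2:ℝ) ^ (1 - I2) with hv
  have hu1 : (1:ℝ) ≤ u := by
    have : (2:ℝ) ^ (0:ℝ) ≤ (2:ℝ) ^ (1 - I1) :=
      Real.rpow_le_rpow_of_exponent_le one_le_two (by linarith)
    simpa using this
  have hv1 : (1:ℝ) ≤ v := by
    have : (2:ℝ) ^ (0:ℝ) ≤ (2:ℝ) ^ (1 - I2) :=
      Real.rpow_le_rpow_of_exponent_le one_le_two (by linarith)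
    simpa using this
  have huv : (2:ℝ) ≤ u * v := by
    have hmul : u * v = (2:ℝ) ^ ((1 - I1) + (1 - I2)) := by
      rw [hu, hv, ← Real.rpow_add (by norm_num)]
    have : (2:ℝ) ^ (1:ℝ) ≤ (2:ℝ) ^ ((1 - I1) + (1 - I2)) :=
      Real.rpow_le_rpow_of_exponent_le one_le_two (by linarith)
    rw [hmul]
    simpa using this
  constructor
  · nlinarith [sq_nonneg (u - 1), sq_nonneg (v - 1), mul_pos (lt_of_lt_of_le one_pos hu1) (lt_of_lt_of_le one_pos hv1)]
  · nlinarith [sq_nonneg (u - 1), sq_nonneg (v - 1), mul_pos (lt_of_lt_of_le one_pos hu1) (lt_of_lt_of_le one_pos hv1)]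
end

section
/- Let τ^{AB} = (id ⊗ N)(Φ^{AA'}) where Φ is the maximally entangled qubit state and N is a quantum channel, and let |ψ⟩^{ABCR} be the corresponding channel state (1/√2) Σ_z |z⟩^A|z⟩^C U_N|z⟩^{A'}. Then I(Z^A;B)_ψ - I(Z^A;R)_ψ = H(B)_τ - H(AB)_τ, i.e., the difference of amplitude-information to Bob and to the reservoir equals the coherent information of N. -/
open scoped ComplexConjugate

/-- Von Neumann entropy (base 2) of a matrix. -/
noncomputable def vnEntropy {n : Type*} [Fintype n] [DecidableEq n]
    (ρ : Matrix n n ℂ) : ℝ :=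
  if h : ρ.IsHermitian then -∑ i, h.eigenvalues i * Real.logb 2 (h.eigenvalues i) else 0

open Polynomial Matrix

lemma eval_charpoly'' {n : Type*} [Fintype n] [DecidableEq n] (M : Matrix n n ℂ) (x : ℂ) :
    M.charpoly.eval x = (x • (1 : Matrix n n ℂ) - M).det := by
  rw [Matrix.charpoly, ← Polynomial.coe_evalRingHom, RingHom.map_det]
  congr 1
  ext i j
  simp [charmatrix_apply, Matrix.one_apply, Matrix.diagonal_apply, apply_ite]

lemma herm_charpoly {n : Type*} [Fintype n] [DecidableEq n] {M : Matrix n n ℂ}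
    (hM : M.IsHermitian) :
    M.charpoly = ∏ i, (X - C (hM.eigenvalues i : ℂ)) := by
  apply Polynomial.funext
  intro x
  rw [eval_charpoly'']
  have hU := (Matrix.mem_unitaryGroup_iff).mp (hM.eigenvectorUnitary).2
  have hU' := (Matrix.mem_unitaryGroup_iff').mp (hM.eigenvectorUnitary).2
  set U : Matrix n n ℂ := (hM.eigenvectorUnitary : Matrix n n ℂ)
  have key : x • (1 : Matrix n n ℂ) - M
      = U * (x • 1 - diagonal (RCLike.ofReal ∘ hM.eigenvalues)) * star U := by
    rw [Matrix.mul_sub, Matrix.sub_mul]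
    nth_rewrite 1 [hM.spectral_theorem]
    congr 1
    rw [Matrix.mul_smul, Matrix.smul_mul, Matrix.mul_one, hU]
  rw [key, det_mul, det_mul, mul_comm, ← mul_assoc, ← det_mul, hU', det_one, one_mul]
  have : x • (1 : Matrix n n ℂ) - diagonal (RCLike.ofReal ∘ hM.eigenvalues)
      = diagonal (fun i => x - (hM.eigenvalues i : ℂ)) := by
    rw [smul_one_eq_diagonal, diagonal_sub]
    rfl
  rw [this, det_diagonal]
  simp [eval_prod]

lemma herm_entropy_roots {n : Type*} [Fintype n] [DecidableEq n] {M : Matrix n n ℂ}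
    (hM : M.IsHermitian) (f : ℝ → ℝ) :
    ∑ i, f (hM.eigenvalues i) = ((M.charpoly.roots).map (fun z => f z.re)).sum := by
  have : M.charpoly.roots = Finset.univ.val.map (fun i => (hM.eigenvalues i : ℂ)) := by
    rw [herm_charpoly hM]
    have : ∏ i, (X - C (hM.eigenvalues i : ℂ))
        = ((Finset.univ.val.map (fun i => (hM.eigenvalues i : ℂ))).map
            (fun a => X - C a)).prod := by
      rw [Multiset.map_map]; rfl
    rw [this, Polynomial.roots_multiset_prod_X_sub_C]
  rw [this, Multiset.map_map, Finset.sum]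
  congr 1

lemma vnEntropy_eq_roots {n : Type*} [Fintype n] [DecidableEq n] {M : Matrix n n ℂ}
    (hM : M.IsHermitian) :
    vnEntropy M = -((M.charpoly.roots).map
      (fun z => z.re * Real.logb 2 z.re)).sum := by
  rw [vnEntropy, dif_pos hM, herm_entropy_roots hM (fun x => x * Real.logb 2 x)]

lemma det_smul_one_sub {k : Type*} [Fintype k] [DecidableEq k] {x : ℂ} (hx : x ≠ 0)
    (M : Matrix k k ℂ) :
    det (x • (1 : Matrix k k ℂ) - M) = x ^ (Fintype.card k) * det (1 - x⁻¹ • M) := by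
  have : x • (1 : Matrix k k ℂ) - M = x • ((1 : Matrix k k ℂ) - x⁻¹ • M) := by
    rw [smul_sub, smul_smul, mul_inv_cancel₀ hx, one_smul]
  rw [this, Matrix.det_smul]

lemma charpoly_mul_comm_rect {m n : Type*} [Fintype m] [DecidableEq m] [Fintype n] [DecidableEq n]
    (A : Matrix m n ℂ) (Bm : Matrix n m ℂ) :
    (A * Bm).charpoly * X ^ (Fintype.card n) = (Bm * A).charpoly * X ^ (Fintype.card m) := by
  have key : ∀ x : ℂ, x ≠ 0 →
      ((A * Bm).charpoly * X ^ (Fintype.card n) -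
        (Bm * A).charpoly * X ^ (Fintype.card m)).eval x = 0 := by
    intro x hx
    have hb : det (Matrix.fromBlocks (1 : Matrix m m ℂ) (x⁻¹ • A) Bm (1 : Matrix n n ℂ))
        = det ((1 : Matrix m m ℂ) - x⁻¹ • (A * Bm)) := by
      rw [Matrix.det_fromBlocks_one₂₂, Matrix.smul_mul]
    have hb' : det (Matrix.fromBlocks (1 : Matrix m m ℂ) (x⁻¹ • A) Bm (1 : Matrix n n ℂ))
        = det ((1 : Matrix n n ℂ) - x⁻¹ • (Bm * A)) := by
      rw [Matrix.det_fromBlocks_one₁₁, Matrix.mul_smul]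
    rw [Polynomial.eval_sub, Polynomial.eval_mul, Polynomial.eval_mul, Polynomial.eval_pow,
      Polynomial.eval_pow, Polynomial.eval_X, eval_charpoly'', eval_charpoly'', det_smul_one_sub hx (A*Bm), det_smul_one_sub hx (Bm*A),
      ← hb, hb']
    ring
  by_contra hne
  have hp : ((A * Bm).charpoly * X ^ (Fintype.card n) -
      (Bm * A).charpoly * X ^ (Fintype.card m)) ≠ 0 := sub_ne_zero.mpr hne
  have : {x : ℂ | ((A * Bm).charpoly * X ^ (Fintype.card n) -
      (Bm * A).charpoly * X ^ (Fintype.card m)).IsRoot x}.Infinite := by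
    apply Set.Infinite.mono (s := {(0 : ℂ)}ᶜ)
    · intro x hx
      exact key x hx
    · exact Set.Finite.infinite_compl (Set.finite_singleton 0)
  exact hp (Polynomial.eq_zero_of_infinite_isRoot _ this)

lemma rootsum_eq {m n : Type*} [Fintype m] [DecidableEq m] [Fintype n] [DecidableEq n]
    (A : Matrix m n ℂ) (f : ℂ → ℝ) (hf : f 0 = 0) :
    ((A * Aᴴ).charpoly.roots.map f).sum = ((Aᴴ * A).charpoly.roots.map f).sum := by
  have h := charpoly_mul_comm_rect A Aᴴ
  have h1 : ((A * Aᴴ).charpoly * X ^ (Fintype.card n)).roots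
      = (A * Aᴴ).charpoly.roots + (Fintype.card n) • ({0} : Multiset ℂ) := by
    rw [Polynomial.roots_mul (mul_ne_zero (Matrix.charpoly_monic _).ne_zero
      (pow_ne_zero _ Polynomial.X_ne_zero)), Polynomial.roots_pow, Polynomial.roots_X]
  have h2 : ((Aᴴ * A).charpoly * X ^ (Fintype.card m)).roots
      = (Aᴴ * A).charpoly.roots + (Fintype.card m) • ({0} : Multiset ℂ) := by
    rw [Polynomial.roots_mul (mul_ne_zero (Matrix.charpoly_monic _).ne_zero
      (pow_ne_zero _ Polynomial.X_ne_zero)), Polynomial.roots_pow, Polynomial.roots_X]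
  have h3 : (A * Aᴴ).charpoly.roots + (Fintype.card n) • ({0} : Multiset ℂ)
      = (Aᴴ * A).charpoly.roots + (Fintype.card m) • ({0} : Multiset ℂ) := by
    rw [← h1, ← h2, h]
  have h4 := congrArg (fun s : Multiset ℂ => (s.map f).sum) h3
  simpa [Multiset.map_nsmul, hf, Multiset.nsmul_singleton, Multiset.sum_replicate] using h4

lemma vnEntropy_mul_conjTranspose {m n : Type*} [Fintype m] [DecidableEq m]
    [Fintype n] [DecidableEq n] (A : Matrix m n ℂ) :
    vnEntropy (A * Aᴴ) = vnEntropy (Aᴴ * A) := by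
  rw [vnEntropy_eq_roots (Matrix.isHermitian_mul_conjTranspose_self A),
    vnEntropy_eq_roots (Matrix.isHermitian_conjTranspose_mul_self A)]
  rw [rootsum_eq A (fun z => z.re * Real.logb 2 z.re) (by simp)]

lemma vnEntropy_transpose {n : Type*} [Fintype n] [DecidableEq n] {M : Matrix n n ℂ}
    (hM : M.IsHermitian) : vnEntropy Mᵀ = vnEntropy M := by
  rw [vnEntropy_eq_roots hM.transpose, vnEntropy_eq_roots hM]
  have : Mᵀ.charpoly = M.charpoly := by
    apply Polynomial.funext
    intro x
    rw [eval_charpoly'', eval_charpoly'']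
    have : x • (1 : Matrix n n ℂ) - Mᵀ = (x • (1 : Matrix n n ℂ) - M)ᵀ := by
      rw [Matrix.transpose_sub, Matrix.transpose_smul, Matrix.transpose_one]
    rw [this, Matrix.det_transpose]
  rw [this]


/-- Partial trace over the first tensor factor. -/
noncomputable def ptraceLeft {α β : Type*} [Fintype α]
    (M : Matrix (α × β) (α × β) ℂ) : Matrix β β ℂ :=
  Matrix.of fun i j => ∑ a, M (a, i) (a, j)

/-- Partial trace over the second tensor factor. -/
noncomputable def ptraceRight {α β : Type*} [Fintype β]
    (M : Matrix (α × β) (α × β) ℂ) : Matrix α α ℂ :=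
  Matrix.of fun i j => ∑ b, M (i, b) (j, b)

/-- Quantum mutual information `I(A;B) = H(A) + H(B) - H(AB)` of a bipartite state. -/
noncomputable def mutInfo {α β : Type*} [Fintype α] [Fintype β]
    [DecidableEq α] [DecidableEq β] (M : Matrix (α × β) (α × β) ℂ) : ℝ :=
  vnEntropy (ptraceRight M) + vnEntropy (ptraceLeft M) - vnEntropy M

/-- Let `U_N : |z⟩ ↦ V z` (with `V` an isometry into `B ⊗ R`) be an isometric
extension of a qubit channel `N`, let `τ^{AB} = (id ⊗ N)(Φ^{AA'})` with `Φ` the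
maximally entangled qubit state, and let `|ψ⟩^{ABCR}` be the channel state
`(1/√2) Σ_z |z⟩^A |z⟩^C U_N|z⟩`.  Then
`I(Z^A;B)_ψ - I(Z^A;R)_ψ = H(B)_τ - H(AB)_τ`,
i.e. the difference of the amplitude information to Bob and to the reservoir
equals the coherent information of `N`. -/
theorem amplitude_difference_eq_coherent_info {B R : Type*}
    [Fintype B] [DecidableEq B] [Fintype R] [DecidableEq R]
    (V : Fin 2 → B × R → ℂ)
    (hiso : ∀ z z' : Fin 2, ∑ i, conj (V z i) * V z' i = if z = z' then 1 else 0) :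
    -- τ^{AB} = (id ⊗ N)(Φ^{AA'})
    let τ : Matrix (Fin 2 × B) (Fin 2 × B) ℂ := Matrix.of fun a b =>
      (1/2 : ℂ) * ∑ r, V a.1 (a.2, r) * conj (V b.1 (b.2, r))
    -- cq state of the amplitude variable Z and Bob's output B
    let ρZB : Matrix (Fin 2 × B) (Fin 2 × B) ℂ := Matrix.of fun a b =>
      if a.1 = b.1 then (1/2 : ℂ) * ∑ r, V a.1 (a.2, r) * conj (V a.1 (b.2, r)) else 0
    -- cq state of the amplitude variable Z and the reservoir R
    let ρZR : Matrix (Fin 2 × R) (Fin 2 × R) ℂ := Matrix.of fun a b =>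
      if a.1 = b.1 then (1/2 : ℂ) * ∑ bb, V a.1 (bb, a.2) * conj (V a.1 (bb, b.2)) else 0
    mutInfo ρZB - mutInfo ρZR = vnEntropy (ptraceLeft τ) - vnEntropy τ := by
  intro τ ρZB ρZR
  set c : ℂ := Complex.ofReal (Real.sqrt 2)⁻¹ with hcdef
  have hcconj : conj c = c := by rw [hcdef]; exact Complex.conj_ofReal _
  have hc : c * c = 1/2 := by
    rw [hcdef, ← Complex.ofReal_mul, ← mul_inv, Real.mul_self_sqrt (by norm_num)]
    norm_num
  set X : Matrix (Fin 2 × B) (Fin 2 × R) ℂ :=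
    Matrix.of fun p q => if p.1 = q.1 then c * V p.1 (p.2, q.2) else 0 with hXdef
  set W : Matrix (Fin 2 × B) R ℂ :=
    Matrix.of fun p r => c * V p.1 (p.2, r) with hWdef
  have ha : ρZB = X * Xᴴ := by
    ext p q
    simp only [ρZB, X, Matrix.mul_apply, Matrix.conjTranspose_apply, Matrix.of_apply,
      Complex.star_def, apply_ite (starRingEnd ℂ), _root_.map_mul, _root_.map_zero, hcconj,
      ite_mul, zero_mul, mul_ite, mul_zero, Fintype.sum_prod_type, ite_self]
    by_cases h : p.1 = q.1
    · rw [if_pos h, Finset.sum_eq_single q.1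
        (fun z _ hz => Finset.sum_eq_zero fun r _ => by split_ifs <;> simp_all)
        (by simp)]
      simp only [h, eq_self_iff_true, if_true]
      rw [Finset.mul_sum]
      refine Finset.sum_congr rfl fun r _ => ?_
      linear_combination (-(V q.1 (p.2, r) * conj (V q.1 (q.2, r)))) * hc
    · rw [if_neg h]
      symm; apply Finset.sum_eq_zero; intro z _; apply Finset.sum_eq_zero; intro r _
      split_ifs <;> simp_all
  have hb : ρZR = (Xᴴ * X)ᵀ := by
    ext p q
    simp only [ρZR, X, Matrix.transpose_apply, Matrix.mul_apply, Matrix.conjTranspose_apply,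
      Matrix.of_apply, Complex.star_def, apply_ite (starRingEnd ℂ), _root_.map_mul, _root_.map_zero, hcconj, ite_mul, zero_mul,
      mul_ite, mul_zero, Fintype.sum_prod_type, ite_self]
    by_cases h : p.1 = q.1
    · rw [if_pos h, Finset.sum_eq_single q.1
        (fun z _ hz => Finset.sum_eq_zero fun b _ => by split_ifs <;> simp_all)
        (by simp)]
      simp only [h, eq_self_iff_true, if_true]
      rw [Finset.mul_sum]
      refine Finset.sum_congr rfl fun b _ => ?_
      linear_combination (-(V q.1 (b, p.2) * conj (V q.1 (b, q.2)))) * hc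
    · rw [if_neg h]
      symm; apply Finset.sum_eq_zero; intro z _; apply Finset.sum_eq_zero; intro b _
      split_ifs <;> simp_all
  have hcc : τ = W * Wᴴ := by
    ext p q
    simp only [τ, W, Matrix.mul_apply, Matrix.conjTranspose_apply, Matrix.of_apply,
      Complex.star_def]
    rw [Finset.mul_sum]
    refine Finset.sum_congr rfl fun r _ => ?_
    rw [_root_.map_mul, hcconj]
    linear_combination (-(V p.1 (p.2, r) * conj (V q.1 (q.2, r)))) * hc
  have hd : ptraceLeft ρZR = (Wᴴ * W)ᵀ := by
    ext i j
    simp only [ρZR, W, ptraceLeft, Matrix.transpose_apply, Matrix.mul_apply,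
      Matrix.conjTranspose_apply, Matrix.of_apply, Complex.star_def, if_true, eq_self_iff_true]
    rw [Fintype.sum_prod_type]
    refine Finset.sum_congr rfl fun z _ => ?_
    rw [Finset.mul_sum]
    refine Finset.sum_congr rfl fun b _ => ?_
    rw [_root_.map_mul, hcconj]
    linear_combination (-(V z (b, i) * conj (V z (b, j)))) * hc
  have he : ptraceLeft ρZB = ptraceLeft τ := by
    ext i j
    simp only [ρZB, τ, ptraceLeft, Matrix.of_apply]
    simp
  have hf : ptraceRight ρZB = ptraceRight ρZR := by
    ext z z'
    simp only [ρZB, ρZR, ptraceRight, Matrix.of_apply]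
    by_cases h : z = z'
    · subst h
      simp only [if_true, ← Finset.mul_sum]
      congr 1
      exact Finset.sum_comm
    · simp [h]
  have h1 : vnEntropy ρZB = vnEntropy ρZR := by
    rw [ha, hb, vnEntropy_mul_conjTranspose X,
      vnEntropy_transpose (Matrix.isHermitian_conjTranspose_mul_self X)]
  have h2 : vnEntropy (ptraceLeft ρZR) = vnEntropy τ := by
    rw [hd, hcc, vnEntropy_transpose (Matrix.isHermitian_conjTranspose_mul_self W),
      ← vnEntropy_mul_conjTranspose W]
  simp only [mutInfo, hf, he, h1, h2]
  ring
end

section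
/- For the extremal process F'_{n+1} = (F'_n)² if b_n = 0 and F'_{n+1} = 1-(1-F'_n)² if b_n = 1, define the complementary process G'_n by G'_0 = 1 - F'_0 with complementary bit choices (b_n replaced by 1-b_n). Then G'_n = 1 - F''_n where F''_n is the process started at 1 - F'_0 with bits 1-b_n; consequently if F'_0 + G'_0 ≤ 1, i.e. the initial values satisfy the constraint, then for every realization, F'_n and G'_n cannot both converge to 1. -/
open Filter

/-- The extremal (BEC) fidelity evolution process. -/
noncomputable def polarF (b : ℕ → Bool) (x : ℝ) : ℕ → ℝ
  | 0 => x
  | n + 1 => if b n then 2 * polarF b x n - (polarF b x n) ^ 2 else (polarF b x n) ^ 2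

lemma polarF_mem (b : ℕ → Bool) (x : ℝ) (hx : x ∈ Set.Icc (0:ℝ) 1) :
    ∀ n, polarF b x n ∈ Set.Icc (0:ℝ) 1 := by
  intro n
  induction n with
  | zero => exact hx
  | succ n ih =>
    obtain ⟨h0, h1⟩ := ih
    simp only [polarF]
    split <;> constructor <;> nlinarith

lemma polarF_mono (b : ℕ → Bool) {x y : ℝ} (hx : x ∈ Set.Icc (0:ℝ) 1)
    (hy : y ∈ Set.Icc (0:ℝ) 1) (hxy : x ≤ y) :
    ∀ n, polarF b x n ≤ polarF b y n := by
  intro n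
  induction n with
  | zero => exact hxy
  | succ n ih =>
    obtain ⟨h0, h1⟩ := polarF_mem b x hx n
    obtain ⟨g0, g1⟩ := polarF_mem b y hy n
    simp only [polarF]
    split <;> nlinarith

/-- The process with complementary bit choices started at `1 - F'_0` is the
complement `1 - F'_n` of the original process; consequently, if the initial
values of the original process and of a complementary-bit process satisfy
`F'_0 + G'_0 ≤ 1`, then the two processes cannot both converge to `1`. -/
theorem polarF_complement (b : ℕ → Bool) (x y : ℝ)
    (hx : x ∈ Set.Icc (0:ℝ) 1) (hy : y ∈ Set.Icc (0:ℝ) 1) :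
    (∀ n, polarF (fun k => !(b k)) (1 - x) n = 1 - polarF b x n) ∧
    (x + y ≤ 1 →
      ¬ (Tendsto (polarF b x) atTop (nhds 1) ∧
         Tendsto (polarF (fun k => !(b k)) y) atTop (nhds 1))) := by
  have hcomp : ∀ n, polarF (fun k => !(b k)) (1 - x) n = 1 - polarF b x n := by
    intro n
    induction n with
    | zero => simp [polarF]
    | succ n ih =>
      simp only [polarF, ih]
      cases h : b n <;> simp [h] <;> ring
  refine ⟨hcomp, fun hsum ⟨hF, hG⟩ => ?_⟩
  have h1x : (1 - x) ∈ Set.Icc (0:ℝ) 1 := ⟨by linarith [hx.2], by linarith [hx.1]⟩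
  have hle : ∀ n, polarF (fun k => !(b k)) y n ≤ 1 - polarF b x n := by
    intro n
    rw [← hcomp n]
    exact polarF_mono _ hy h1x (by linarith) n
  have h0 : Tendsto (fun n => 1 - polarF b x n) atTop (nhds 0) := by
    have := (tendsto_const_nhds (x := (1:ℝ)) (f := atTop)).sub hF
    simpa using this
  have : (1:ℝ) ≤ 0 := le_of_tendsto_of_tendsto' hG h0 hle
  linarith
end

section
/- Let p ∈ [0,1/2) and define the BEC fidelity recursion F(q, b) as above. If for a string b we have F(p, b) close to 1 (the channel is bad), then F(p, b̄') is close to 0 (the complementary channel is good), in the precise sense: F(p, b) + F(p, b̄') ≤ F(p,b) + F(1-p, b̄') = 1 + (F(p,b̄') - F(1-p,b̄')) ≤ 1, using monotonicity since p ≤ 1-p. -/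
/-- BEC-synthesized fidelity recursion. -/
noncomputable def becF (p : ℝ) : List Bool → ℝ
  | [] => p
  | bit :: rest => if bit then 2 * becF p rest - (becF p rest) ^ 2 else (becF p rest) ^ 2

lemma becF_bounds (p : ℝ) (h0 : 0 ≤ p) (h1 : p ≤ 1) (b : List Bool) :
    0 ≤ becF p b ∧ becF p b ≤ 1 := by
  induction b with
  | nil => exact ⟨h0, h1⟩
  | cons bit rest ih =>
    obtain ⟨ha, hb⟩ := ih
    cases bit <;> simp only [becF, Bool.false_eq_true, if_false, if_true] <;> constructor <;> nlinarith

lemma becF_mono (x y : ℝ) (hx : 0 ≤ x) (hxy : x ≤ y) (hy : y ≤ 1) (b : List Bool) :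
    becF x b ≤ becF y b := by
  induction b with
  | nil => exact hxy
  | cons bit rest ih =>
    obtain ⟨ha, hb⟩ := becF_bounds x hx (hxy.trans hy) rest
    obtain ⟨hc, hd⟩ := becF_bounds y (hx.trans hxy) hy rest
    cases bit <;> simp only [becF, Bool.false_eq_true, if_false, if_true] <;> nlinarith

lemma becF_compl (p : ℝ) (b : List Bool) :
    becF (1 - p) (b.map (fun t => !t)) = 1 - becF p b := by
  induction b with
  | nil => simp [becF]
  | cons bit rest ih =>
    cases bit <;> simp only [List.map_cons, becF, Bool.not_true, Bool.not_false,
      Bool.false_eq_true, if_true, if_false, ih] <;> ring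

/-- For erasure probability `p < 1/2`, no index can be bad for both the
amplitude recursion and the complementary phase recursion:
`F(p, b) + F(p, b̄) ≤ 1` where `b̄` is the bitwise complement of `b`. -/
theorem becF_no_doubly_bad (p : ℝ) (hp : p ∈ Set.Ico (0:ℝ) (1/2)) (b : List Bool) :
    becF p b + becF p (b.map (fun t => !t)) ≤ 1 := by
  obtain ⟨h0, h2⟩ := hp
  have hmono := becF_mono p (1 - p) h0 (by linarith) (by linarith) (b.map (fun t => !t))
  have hc := becF_compl p b
  linarith
end
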